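/- Let ψ ∈ ℂ^8 have real coordinates w₀,...,w₇, written as ψ = |0⟩A + |1⟩B where A = [[w₀,w₁],[w₂,w₃]] and B = [[w₄,w₅],[w₆,w₇]]. Then Δ(ψ) = (w₀w₇ - w₁w₆ - w₂w₅ + w₃w₄)² - 4(w₁w₂ - w₀w₃)(w₅w₆ - w₄w₇) ≥ 0 if and only if det(A) = 0, or det(B) = 0, or there exists a real number z with det(A + zB) = 0. -/

import Mathlib

open Matrix

noncomputable section

/-- for a real state with amplitudes `w₀,…,w₇`, written as `|0⟩A + |1⟩B`,
`Δ(ψ) ≥ 0` iff `det A = 0`, or `det B = 0`, or `det(A + zB) = 0` for some real `z`. -/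
theorem stmt_15 (w : Fin 8 → ℝ) :
    (w 0 * w 7 - w 1 * w 6 - w 2 * w 5 + w 3 * w 4) ^ 2 -
        4 * (w 1 * w 2 - w 0 * w 3) * (w 5 * w 6 - w 4 * w 7) ≥ 0 ↔
      ((!![w 0, w 1; w 2, w 3] : Matrix (Fin 2) (Fin 2) ℝ).det = 0 ∨
       (!![w 4, w 5; w 6, w 7] : Matrix (Fin 2) (Fin 2) ℝ).det = 0 ∨
       ∃ z : ℝ, (!![w 0, w 1; w 2, w 3] + z • !![w 4, w 5; w 6, w 7]).det = 0) := by
  simp only [Matrix.det_fin_two, Matrix.add_apply, Matrix.smul_apply, Matrix.of_apply,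
    Matrix.cons_val', Matrix.cons_val_zero, Matrix.cons_val_one, Matrix.head_cons,
    Matrix.empty_val', Matrix.cons_val_fin_one, Matrix.head_fin_const, smul_eq_mul]
  constructor
  · intro h
    by_cases hb0 : w 4 * w 7 - w 5 * w 6 = 0
    · exact Or.inr (Or.inl hb0)
    · refine Or.inr (Or.inr ?_)
      have hE : ((w 0 * w 7 - w 1 * w 6 - w 2 * w 5 + w 3 * w 4) ^ 2 -
          4 * (w 0 * w 3 - w 1 * w 2) * (w 4 * w 7 - w 5 * w 6)) ≥ 0 := by nlinarith [h]
      have hs2 : Real.sqrt ((w 0 * w 7 - w 1 * w 6 - w 2 * w 5 + w 3 * w 4) ^ 2 -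
          4 * (w 0 * w 3 - w 1 * w 2) * (w 4 * w 7 - w 5 * w 6)) ^ 2 =
          (w 0 * w 7 - w 1 * w 6 - w 2 * w 5 + w 3 * w 4) ^ 2 -
          4 * (w 0 * w 3 - w 1 * w 2) * (w 4 * w 7 - w 5 * w 6) := Real.sq_sqrt hE
      refine ⟨(-(w 0 * w 7 - w 1 * w 6 - w 2 * w 5 + w 3 * w 4) +
          Real.sqrt ((w 0 * w 7 - w 1 * w 6 - w 2 * w 5 + w 3 * w 4) ^ 2 -
          4 * (w 0 * w 3 - w 1 * w 2) * (w 4 * w 7 - w 5 * w 6))) /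
          (2 * (w 4 * w 7 - w 5 * w 6)), ?_⟩
      have h2 : (2 : ℝ) * (w 4 * w 7 - w 5 * w 6) ≠ 0 := by
        intro hc; apply hb0; linarith
      set s := Real.sqrt ((w 0 * w 7 - w 1 * w 6 - w 2 * w 5 + w 3 * w 4) ^ 2 -
          4 * (w 0 * w 3 - w 1 * w 2) * (w 4 * w 7 - w 5 * w 6)) with hs
      set z := (-(w 0 * w 7 - w 1 * w 6 - w 2 * w 5 + w 3 * w 4) + s) /
          (2 * (w 4 * w 7 - w 5 * w 6)) with hz
      have hz2 : z * (2 * (w 4 * w 7 - w 5 * w 6)) =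
          -(w 0 * w 7 - w 1 * w 6 - w 2 * w 5 + w 3 * w 4) + s := div_mul_cancel₀ _ h2
      have hD4 : (4 : ℝ) * (w 4 * w 7 - w 5 * w 6) ≠ 0 := by
        intro hc; apply hb0; linarith
      apply (mul_right_inj' hD4).mp
      linear_combination (z * (2 * (w 4 * w 7 - w 5 * w 6)) +
        (w 0 * w 7 - w 1 * w 6 - w 2 * w 5 + w 3 * w 4) + s) * hz2 + hs2
  · rintro (h | h | ⟨z, hz⟩)
    · have : (w 0 * w 7 - w 1 * w 6 - w 2 * w 5 + w 3 * w 4) ^ 2 -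
          4 * (w 1 * w 2 - w 0 * w 3) * (w 5 * w 6 - w 4 * w 7) =
          (w 0 * w 7 - w 1 * w 6 - w 2 * w 5 + w 3 * w 4) ^ 2 := by
        linear_combination 4 * (w 5 * w 6 - w 4 * w 7) * h
      rw [this]; positivity
    · have : (w 0 * w 7 - w 1 * w 6 - w 2 * w 5 + w 3 * w 4) ^ 2 -
          4 * (w 1 * w 2 - w 0 * w 3) * (w 5 * w 6 - w 4 * w 7) =
          (w 0 * w 7 - w 1 * w 6 - w 2 * w 5 + w 3 * w 4) ^ 2 := by
        linear_combination 4 * (w 1 * w 2 - w 0 * w 3) * h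
      rw [this]; positivity
    · have : (w 0 * w 7 - w 1 * w 6 - w 2 * w 5 + w 3 * w 4) ^ 2 -
          4 * (w 1 * w 2 - w 0 * w 3) * (w 5 * w 6 - w 4 * w 7) =
          (2 * (w 4 * w 7 - w 5 * w 6) * z +
            (w 0 * w 7 - w 1 * w 6 - w 2 * w 5 + w 3 * w 4)) ^ 2 := by
        linear_combination (-(4 * (w 4 * w 7 - w 5 * w 6))) * hz
      rw [this]; positivity
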